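/- Let 𝒫 be a finite set of primes and let G = ⋂_{p ∈ 𝒫} G_p, where G_p = {A ∈ GL₃(ℤ) : A ≡ I (mod p)} is the principal congruence subgroup of level p in GL₃(ℤ). Then G is a residually finite p-group for every p ∈ 𝒫, and G is not right orderable. -/

import Mathlib

/-- A group `G` is a residually finite `p`-group if for every `g ≠ 1` there is a
normal subgroup `N` of `G` with `g ∉ N` such that `G/N` is a finite `p`-group. -/
def IsResiduallyFinitePGroup (p : ℕ) (G : Type*) [Group G] : Prop :=
  ∀ g : G, g ≠ 1 → ∃ (N : Subgroup G) (hN : N.Normal), g ∉ N ∧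
    (letI := hN; Finite (G ⧸ N) ∧ IsPGroup p (G ⧸ N))

/-- A group `G` is right orderable if it admits a total order `≤` such that
`x ≤ y → x * g ≤ y * g` for all `g, x, y ∈ G`. -/
def IsRightOrderable (G : Type*) [Group G] : Prop :=
  ∃ r : LinearOrder G, ∀ g x y : G, r.le x y → r.le (x * g) (y * g)

/-- The principal congruence subgroup of level `p` in `GL₃(ℤ)`: the matrices
congruent to the identity modulo `p`, i.e. the kernel of the reduction map
`GL₃(ℤ) →* GL₃(ℤ/p)`. -/
def congruenceSubgroup (p : ℕ) : Subgroup (Matrix.GeneralLinearGroup (Fin 3) ℤ) :=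
  (Matrix.GeneralLinearGroup.map (n := Fin 3) (Int.castRingHom (ZMod p))).ker

open Matrix

abbrev GL3 := Matrix.GeneralLinearGroup (Fin 3) ℤ

/-- elementary unipotent matrix as a unit -/
def elU (i j : Fin 3) (h : j ≠ i) (t : ℤ) : GL3 where
  val := 1 + Matrix.single i j t
  inv := 1 + Matrix.single i j (-t)
  val_inv := by
    simp [add_mul, mul_add, Matrix.single_mul_single_of_ne t i j i h,
      ← Matrix.single_add, add_assoc]
  inv_val := by
    simp [add_mul, mul_add, Matrix.single_mul_single_of_ne (-t) i j i h,
      ← Matrix.single_add, add_assoc]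

theorem elU_val (i j : Fin 3) (h : j ≠ i) (t : ℤ) :
    (elU i j h t).val = 1 + Matrix.single i j t := rfl

theorem elU_mul (i j : Fin 3) (h : j ≠ i) (t s : ℤ) :
    elU i j h t * elU i j h s = elU i j h (t + s) := by
  ext : 1
  show (1 + Matrix.single i j t) * (1 + Matrix.single i j s) = _
  simp [add_mul, mul_add, Matrix.single_mul_single_of_ne t i j i h,
    ← Matrix.single_add, elU_val, add_assoc]

theorem elU_inv (i j : Fin 3) (h : j ≠ i) (t : ℤ) :
    (elU i j h t)⁻¹ = elU i j h (-t) := by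
  ext : 1
  rfl

theorem elU_pow (i j : Fin 3) (h : j ≠ i) (t : ℤ) (n : ℕ) :
    (elU i j h t) ^ n = elU i j h (n * t) := by
  induction n with
  | zero =>
    ext : 1
    simp [elU_val]
  | succ n ih =>
    rw [pow_succ, ih, elU_mul]
    congr 1
    push_cast
    ring
theorem elU_zpow (i j : Fin 3) (h : j ≠ i) (t : ℤ) (c : ℤ) :
    (elU i j h t) ^ c = elU i j h (c * t) := by
  obtain ⟨n, rfl | rfl⟩ := c.eq_nat_or_neg
  · rw [zpow_natCast, elU_pow]
  · rw [_root_.zpow_neg, zpow_natCast, elU_pow, elU_inv]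
    congr 1
    push_cast
    ring

theorem elU_commute {i j k l : Fin 3} (hji : j ≠ i) (hlk : l ≠ k)
    (hjk : j ≠ k) (hli : l ≠ i) (t s : ℤ) :
    Commute (elU i j hji t) (elU k l hlk s) := by
  show _ * _ = _ * _
  ext : 1
  show (1 + Matrix.single i j t) * (1 + Matrix.single k l s)
      = (1 + Matrix.single k l s) * (1 + Matrix.single i j t)
  have h1 : Matrix.single i j t * Matrix.single k l s = 0 := Matrix.single_mul_single_of_ne t i j k hjk s
  have h2 : Matrix.single k l s * Matrix.single i j t = 0 := Matrix.single_mul_single_of_ne s k l i hli t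
  simp only [mul_add, add_mul, mul_one, one_mul, h1, h2]
  abel

theorem elU_rel {i j l : Fin 3} (hji : j ≠ i) (hlj : l ≠ j) (hli : l ≠ i) (t s : ℤ) :
    elU i j hji t * elU j l hlj s
      = elU i l hli (t * s) * (elU j l hlj s * elU i j hji t) := by
  ext : 1
  show (1 + Matrix.single i j t) * (1 + Matrix.single j l s)
      = (1 + Matrix.single i l (t * s)) *
        ((1 + Matrix.single j l s) * (1 + Matrix.single i j t))
  have h1 := Matrix.single_mul_single_same t i j l s
  have h2 : Matrix.single j l s * Matrix.single i j t = 0 := Matrix.single_mul_single_of_ne s j l i hli t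
  have h3 : Matrix.single i l (t * s) * Matrix.single j l s = 0 := Matrix.single_mul_single_of_ne (t * s) i l j hlj s
  have h4 : Matrix.single i l (t * s) * Matrix.single i j t = 0 := Matrix.single_mul_single_of_ne (t * s) i l i hli t
  simp only [mul_add, add_mul, mul_one, one_mul, h1, h2, h3, h4, mul_zero]
  abel

theorem elU_ne_one (i j : Fin 3) (h : j ≠ i) (t : ℤ) (ht : t ≠ 0) :
    elU i j h t ≠ 1 := by
  intro hone
  have : (elU i j h t).val i j = (1 : GL3).val i j := by rw [hone]
  rw [elU_val] at this
  simp [Matrix.one_apply_ne' h] at this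
  exact ht this

section ord
variable {G : Type*} [Group G] [LinearOrder G]
  (hr : ∀ g x y : G, x ≤ y → x * g ≤ y * g)

include hr

theorem ord_mul_lt (g x y : G) (h : x < y) : x * g < y * g := by
  rcases lt_iff_le_and_ne.mp h with ⟨hle, hne⟩
  refine lt_iff_le_and_ne.mpr ⟨hr g x y hle, ?_⟩
  intro heq
  exact hne (mul_right_cancel heq)

theorem ord_one_lt_pow {z : G} (hz : 1 < z) (n : ℕ) (hn : 1 ≤ n) :
    1 < z ^ n := by
  induction n with
  | zero => omega
  | succ n ih =>
    rcases Nat.lt_or_ge 1 (n+1) with hlt | hle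
    · have hn1 : 1 ≤ n := by omega
      have h2 : z ^ n < z * z ^ n := by
        have := ord_mul_lt hr (z ^ n) 1 z hz
        rwa [one_mul] at this
      have h3 : z * z ^ n = z ^ (n + 1) := (pow_succ' z n).symm
      exact lt_trans (ih hn1) (h3 ▸ h2)
    · have : n = 0 := by omega
      subst this
      simpa using hz

theorem ord_pow_le_pow {z : G} (hz : 1 < z) {m n : ℕ} (hmn : m ≤ n) :
    z ^ m ≤ z ^ n := by
  have he : z ^ n = z ^ (n - m) * z ^ m := by
    rw [← pow_add]; congr 1; omega
  rw [he]
  rcases Nat.eq_or_lt_of_le hmn with rfl | hlt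
  · simp
  · have h1 : 1 < z ^ (n - m) := ord_one_lt_pow hr hz _ (by omega)
    have := hr (z ^ m) 1 (z ^ (n - m)) (le_of_lt h1)
    rw [one_mul] at this
    exact this

theorem ord_pow_lt_pow {z : G} (hz : 1 < z) {m n : ℕ} (hmn : m < n) :
    z ^ m < z ^ n := by
  have he : z ^ n = z ^ (n - m) * z ^ m := by
    rw [← pow_add]; congr 1; omega
  rw [he]
  have h1 : 1 < z ^ (n - m) := ord_one_lt_pow hr hz _ (by omega)
  have := ord_mul_lt hr (z ^ m) 1 (z ^ (n - m)) h1
  rwa [one_mul] at this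

theorem ord_mul_bound {z x y : G} {m n : ℕ} (hx : x ≤ z ^ m) (hy : y ≤ z ^ n)
    (hzy : Commute z y) : x * y ≤ z ^ (m + n) := by
  have h1 : x * y ≤ z ^ m * y := hr y x (z ^ m) hx
  have h2 : z ^ m * y = y * z ^ m := (hzy.pow_left m).eq
  have h3 : y * z ^ m ≤ z ^ n * z ^ m := hr (z ^ m) y (z ^ n) hy
  have h4 : z ^ n * z ^ m = z ^ (m + n) := by rw [← pow_add, add_comm]
  rw [h2] at h1
  rw [← h4]
  exact le_trans h1 h3

theorem ord_pow_bound {z a : G} {N : ℕ} (ha : a ≤ z ^ N) (hza : Commute z a)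
    (k : ℕ) : a ^ k ≤ z ^ (k * N) := by
  induction k with
  | zero => simp
  | succ k ih =>
    have := ord_mul_bound hr ih ha hza
    rw [pow_succ]
    convert this using 2
    ring

theorem ord_inv_pow_le_one {a : G} (ha : 1 < a) (k : ℕ) : a⁻¹ ^ k ≤ 1 := by
  have hinv : a⁻¹ < 1 := by
    have := ord_mul_lt hr a⁻¹ 1 a ha
    rwa [one_mul, mul_inv_cancel] at this
  induction k with
  | zero => simp
  | succ k ih =>
    have h1 : a⁻¹ ^ k * a⁻¹ ≤ 1 * a⁻¹ := hr a⁻¹ _ 1 ih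
    rw [one_mul] at h1
    rw [pow_succ]
    exact le_trans h1 (le_of_lt hinv)

end ord

section grp
variable {G : Type*} [Group G]

theorem rel_pow_a {a b z : G} {c : ℤ} (hza : Commute z a)
    (hab : a * b = z ^ c * (b * a)) (k : ℕ) :
    a ^ k * b = z ^ (c * k) * (b * a ^ k) := by
  induction k with
  | zero => simp
  | succ k ih =>
    have hcomm : a * z ^ (c * k) = z ^ (c * k) * a := (hza.symm.zpow_right (c * k)).eq
    calc a ^ (k + 1) * b = a * (a ^ k * b) := by rw [pow_succ']; group
      _ = a * (z ^ (c * k) * (b * a ^ k)) := by rw [ih]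
      _ = (a * z ^ (c * k)) * (b * a ^ k) := by group
      _ = (z ^ (c * k) * a) * (b * a ^ k) := by rw [hcomm]
      _ = z ^ (c * k) * ((a * b) * a ^ k) := by group
      _ = z ^ (c * k) * ((z ^ c * (b * a)) * a ^ k) := by rw [hab]
      _ = z ^ (c * (k + 1)) * (b * a ^ (k + 1)) := by
          push_cast
          rw [show c * ((k : ℤ) + 1) = c * k + c by ring, _root_.zpow_add, pow_succ]
          simp only [mul_assoc]
          rw [pow_mul_comm']

theorem rel_pow_pow {a b z : G} {c : ℤ} (hza : Commute z a) (hzb : Commute z b)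
    (hab : a * b = z ^ c * (b * a)) (k : ℕ) :
    a ^ k * b ^ k = z ^ (c * k * k) * (b ^ k * a ^ k) := by
  have step : ∀ m : ℕ, a ^ k * b ^ m = z ^ (c * k * m) * (b ^ m * a ^ k) := by
    intro m
    induction m with
    | zero => simp
    | succ m ih =>
      have h1 : a ^ k * b = z ^ (c * k) * (b * a ^ k) := rel_pow_a hza hab k
      have hcomm : b ^ m * z ^ (c * k) = z ^ (c * k) * b ^ m :=
        ((hzb.zpow_left (c * k)).pow_right m).eq.symm
      calc a ^ k * b ^ (m + 1) = (a ^ k * b ^ m) * b := by rw [pow_succ]; group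
        _ = (z ^ (c * k * m) * (b ^ m * a ^ k)) * b := by rw [ih]
        _ = z ^ (c * k * m) * (b ^ m * (a ^ k * b)) := by group
        _ = z ^ (c * k * m) * (b ^ m * (z ^ (c * k) * (b * a ^ k))) := by rw [h1]
        _ = z ^ (c * k * m) * ((b ^ m * z ^ (c * k)) * (b * a ^ k)) := by group
        _ = z ^ (c * k * m) * ((z ^ (c * k) * b ^ m) * (b * a ^ k)) := by rw [hcomm]
        _ = z ^ (c * k * (m + 1)) * (b ^ (m + 1) * a ^ k) := by
            push_cast
            rw [show c * (k : ℤ) * ((m : ℤ) + 1) = c * k * m + c * k by ring,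
              _root_.zpow_add, pow_succ]
            simp only [mul_assoc]
  exact step k

theorem rel_swap {a b z : G} {c : ℤ} (hab : a * b = z ^ c * (b * a)) :
    b * a = z ^ (-c) * (a * b) := by
  rw [hab]
  group

theorem rel_flip_a {a b z : G} {c : ℤ} (hza : Commute z a)
    (hab : a * b = z ^ c * (b * a)) :
    a⁻¹ * b = z ^ (-c) * (b * a⁻¹) := by
  have h1 : b * a = z ^ (-c) * (a * b) := rel_swap hab
  have hcomm : a⁻¹ * z ^ (-c) = z ^ (-c) * a⁻¹ :=
    (hza.symm.inv_left.zpow_right (-c)).eq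
  calc a⁻¹ * b = a⁻¹ * ((b * a) * a⁻¹) := by group
    _ = a⁻¹ * ((z ^ (-c) * (a * b)) * a⁻¹) := by rw [h1]
    _ = (a⁻¹ * z ^ (-c)) * (a * b * a⁻¹) := by group
    _ = (z ^ (-c) * a⁻¹) * (a * b * a⁻¹) := by rw [hcomm]
    _ = z ^ (-c) * (b * a⁻¹) := by group

theorem rel_flip_b {a b z : G} {c : ℤ} (hzb : Commute z b)
    (hab : a * b = z ^ c * (b * a)) :
    a * b⁻¹ = z ^ (-c) * (b⁻¹ * a) := by
  have h1 : b⁻¹ * a = z ^ c * (a * b⁻¹) := by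
    have hcomm : b⁻¹ * z ^ c = z ^ c * b⁻¹ := (hzb.symm.inv_left.zpow_right c).eq
    calc b⁻¹ * a = b⁻¹ * ((a * b) * b⁻¹) := by group
      _ = b⁻¹ * ((z ^ c * (b * a)) * b⁻¹) := by rw [hab]
      _ = (b⁻¹ * z ^ c) * (b * a * b⁻¹) := by group
      _ = (z ^ c * b⁻¹) * (b * a * b⁻¹) := by rw [hcomm]
      _ = z ^ c * (a * b⁻¹) := by group
  exact rel_swap h1

theorem rel_flip_all [LinearOrder G] {a b z : G} {c : ℤ}
    (hza : Commute z a) (hzb : Commute z b)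
    (hab : a * b = z ^ c * (b * a)) (P Q R : Prop) [Decidable P] [Decidable Q] [Decidable R] :
    ∃ d : ℤ, (d = c ∨ d = -c) ∧ (if P then a else a⁻¹) * (if Q then b else b⁻¹)
      = (if R then z else z⁻¹) ^ d * ((if Q then b else b⁻¹) * (if P then a else a⁻¹)) := by
  have step1 : ∃ d : ℤ, (d = c ∨ d = -c) ∧ (if P then a else a⁻¹) * b
      = z ^ d * (b * (if P then a else a⁻¹)) := by
    split_ifs with h
    · exact ⟨c, Or.inl rfl, hab⟩
    · exact ⟨-c, Or.inr rfl, rel_flip_a hza hab⟩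
  obtain ⟨d1, hd1, h1⟩ := step1
  have step2 : ∃ d : ℤ, (d = c ∨ d = -c) ∧ (if P then a else a⁻¹) * (if Q then b else b⁻¹)
      = z ^ d * ((if Q then b else b⁻¹) * (if P then a else a⁻¹)) := by
    by_cases hQ : Q
    · rw [if_pos hQ]
      exact ⟨d1, hd1, h1⟩
    · rw [if_neg hQ]
      refine ⟨-d1, ?_, rel_flip_b hzb h1⟩
      rcases hd1 with rfl | rfl
      · exact Or.inr rfl
      · exact Or.inl (by ring)
  obtain ⟨d2, hd2, h2⟩ := step2
  by_cases hR : R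
  · rw [if_pos hR]
    exact ⟨d2, hd2, h2⟩
  · rw [if_neg hR]
    refine ⟨-d2, ?_, ?_⟩
    · rcases hd2 with rfl | rfl
      · exact Or.inr rfl
      · exact Or.inl (by ring)
    · rw [_root_.inv_zpow, _root_.zpow_neg, inv_inv]
      exact h2

end grp

section keylem
variable {G : Type*} [Group G] [LinearOrder G]
  (hr : ∀ g x y : G, x ≤ y → x * g ≤ y * g)

include hr

theorem ord_key_aux {a b z : G} {c : ℤ} (hc : 0 < c) (hza : Commute z a)
    (hzb : Commute z b) (hab : a * b = z ^ c * (b * a))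
    (ha : 1 < a) (hb : 1 < b) (hz : 1 < z) : z < a ∨ z < b := by
  by_contra hcon
  push_neg at hcon
  obtain ⟨hA, hB⟩ := hcon
  -- a ≤ z, b ≤ z
  have hA1 : a ≤ z ^ 1 := by simpa using hA
  have hB1 : b ≤ z ^ 1 := by simpa using hB
  have ha3 : a ^ 3 ≤ z ^ 3 := by simpa using ord_pow_bound hr hA1 hza 3
  have hb3 : b ^ 3 ≤ z ^ 3 := by simpa using ord_pow_bound hr hB1 hzb 3
  have hprod : a ^ 3 * b ^ 3 ≤ z ^ 6 :=
    ord_mul_bound hr ha3 hb3 (hzb.pow_right 3)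
  have hiden : a ^ 3 * b ^ 3 = z ^ (c * 3 * 3) * (b ^ 3 * a ^ 3) := by
    have := rel_pow_pow hza hzb hab 3
    simpa using this
  have hwpos : 1 < b ^ 3 * a ^ 3 := by
    have h1 : 1 < a ^ 3 := ord_one_lt_pow hr ha 3 (by omega)
    have h2 : 1 < b ^ 3 := ord_one_lt_pow hr hb 3 (by omega)
    have h3 : 1 * a ^ 3 < b ^ 3 * a ^ 3 := ord_mul_lt hr (a ^ 3) 1 (b ^ 3) h2
    rw [one_mul] at h3
    exact lt_trans h1 h3
  have hcommw : Commute z (b ^ 3 * a ^ 3) := (hzb.pow_right 3).mul_right (hza.pow_right 3)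
  have hlow : z ^ (c * 3 * 3) ≤ z ^ (c * 3 * 3) * (b ^ 3 * a ^ 3) := by
    have h1 : 1 * z ^ (c * 3 * 3) ≤ (b ^ 3 * a ^ 3) * z ^ (c * 3 * 3) :=
      hr (z ^ (c * 3 * 3)) 1 (b ^ 3 * a ^ 3) (le_of_lt hwpos)
    rw [one_mul] at h1
    rw [((hcommw.zpow_left (c * 3 * 3)).eq)]
    exact h1
  have hfin : z ^ (c * 3 * 3) ≤ z ^ 6 := le_trans (le_trans hlow (le_of_eq hiden.symm)) hprod
  -- convert to natural powers
  have hnn : (0 : ℤ) ≤ c * 3 * 3 := by positivity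
  have hzpow : z ^ (c * 3 * 3) = z ^ ((c * 3 * 3).toNat) := by
    rw [← zpow_natCast, Int.toNat_of_nonneg hnn]
  have hge : 6 < (c * 3 * 3).toNat := by omega
  have : z ^ 6 < z ^ ((c * 3 * 3).toNat) := ord_pow_lt_pow hr hz hge
  rw [hzpow] at hfin
  exact absurd (lt_of_lt_of_le this hfin) (lt_irrefl _)

theorem ord_key {a b z : G} {c : ℤ} (hc : c ≠ 0) (hza : Commute z a)
    (hzb : Commute z b) (hab : a * b = z ^ c * (b * a))
    (ha : 1 < a) (hb : 1 < b) (hz : 1 < z) : z < a ∨ z < b := by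
  rcases lt_or_gt_of_ne hc with hneg | hpos
  · have hswap : b * a = z ^ (-c) * (a * b) := rel_swap hab
    have := ord_key_aux hr (by omega) hzb hza hswap hb ha hz
    exact this.symm
  · exact ord_key_aux hr hpos hza hzb hab ha hb hz

theorem hexagon (g : Fin 6 → G) (hne : ∀ i, g i ≠ 1)
    (hcomm : ∀ i : Fin 6, Commute (g i) (g (i + 1)))
    (hrel : ∀ i : Fin 6, ∃ c : ℤ, c ≠ 0 ∧
      g (i - 1) * g (i + 1) = (g i) ^ c * (g (i + 1) * g (i - 1))) : False := by
  set w : Fin 6 → G := fun i => if 1 < g i then g i else (g i)⁻¹ with hw_def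
  have hwdef : ∀ j, w j = if 1 < g j then g j else (g j)⁻¹ := fun _ => rfl
  have hwpos : ∀ i, 1 < w i := by
    intro i
    rw [hwdef]
    split_ifs with h
    · exact h
    · have hlt : g i < 1 := lt_of_le_of_ne (not_lt.mp h) (hne i)
      have := ord_mul_lt hr (g i)⁻¹ (g i) 1 hlt
      rwa [one_mul, mul_inv_cancel] at this
  have hcw : ∀ i : Fin 6, Commute (w i) (w (i + 1)) := by
    intro i
    rw [hwdef, hwdef]
    split_ifs
    · exact hcomm i
    · exact (hcomm i).inv_right
    · exact (hcomm i).inv_left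
    · exact (hcomm i).inv_left.inv_right
  have hkey : ∀ i : Fin 6, w i < w (i - 1) ∨ w i < w (i + 1) := by
    intro i
    obtain ⟨c, hc, hrel_i⟩ := hrel i
    have hza : Commute (g i) (g (i - 1)) := by
      have h0 := hcomm (i - 1)
      rw [sub_add_cancel] at h0
      exact h0.symm
    have hzb : Commute (g i) (g (i + 1)) := hcomm i
    obtain ⟨d, hd, hrel_w⟩ := rel_flip_all hza hzb hrel_i
      (1 < g (i - 1)) (1 < g (i + 1)) (1 < g i)
    rw [← hwdef (i - 1), ← hwdef (i + 1), ← hwdef i] at hrel_w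
    have hd0 : d ≠ 0 := by rcases hd with rfl | rfl <;> simpa using hc
    have hzwa : Commute (w i) (w (i - 1)) := by
      have h0 := hcw (i - 1)
      rw [sub_add_cancel] at h0
      exact h0.symm
    exact ord_key hr hd0 hzwa (hcw i) hrel_w (hwpos _) (hwpos _) (hwpos _)
  obtain ⟨j, hj⟩ := Finite.exists_max w
  rcases hkey j with h | h
  · exact absurd (lt_of_lt_of_le h (hj _)) (lt_irrefl _)
  · exact absurd (lt_of_lt_of_le h (hj _)) (lt_irrefl _)

end keylem

theorem elU_mem_congruence (i j : Fin 3) (h : j ≠ i) (t : ℤ) (q : ℕ)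
    (hq : (q : ℤ) ∣ t) : elU i j h t ∈ congruenceSubgroup q := by
  rw [congruenceSubgroup, MonoidHom.mem_ker]
  ext : 1
  show (Matrix.map (1 + Matrix.single i j t) (Int.castRingHom (ZMod q))) = (1 : Matrix (Fin 3) (Fin 3) (ZMod q))
  have ht : ((t : ℤ) : ZMod q) = 0 := by
    rwa [ZMod.intCast_zmod_eq_zero_iff_dvd]
  ext a b
  rw [Matrix.map_apply, Matrix.add_apply, map_add, Matrix.single, Matrix.of_apply,
    apply_ite (Int.castRingHom (ZMod q))]
  simp only [Int.castRingHom, RingHom.coe_mk, MonoidHom.coe_mk, OneHom.coe_mk] at ht ⊢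
  simp [Matrix.one_apply, ht, apply_ite]
  split_ifs with hab
  · exact fun hn => absurd hab hn
  · exact fun hn => absurd hn hab

theorem sub_ne_one {G : Type*} [Group G] {H : Subgroup G} {x : G} (hx : x ∈ H)
    (h : x ≠ 1) : (⟨x, hx⟩ : H) ≠ 1 := by
  intro he
  exact h (congrArg Subtype.val he)

theorem sub_commute {G : Type*} [Group G] {H : Subgroup G} {x y : G} (hx : x ∈ H)
    (hy : y ∈ H) (h : Commute x y) : Commute (⟨x, hx⟩ : H) (⟨y, hy⟩ : H) :=
  Subtype.ext h

theorem sub_rel {G : Type*} [Group G] {H : Subgroup G} {x y z : G} (hx : x ∈ H)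
    (hy : y ∈ H) (hz : z ∈ H) (c : ℤ) (h : x * y = z ^ c * (y * x)) :
    (⟨x, hx⟩ : H) * ⟨y, hy⟩ = (⟨z, hz⟩ : H) ^ c * (⟨y, hy⟩ * ⟨x, hx⟩) := by
  apply Subtype.ext
  simp only [MulMemClass.coe_mul, SubgroupClass.coe_zpow]
  exact h

theorem not_rightOrderable_inter (P : Finset ℕ) (hP : ∀ p ∈ P, p.Prime) :
    ¬ IsRightOrderable ↥(⨅ q ∈ P, congruenceSubgroup q) := by
  set Gs := ⨅ q ∈ P, congruenceSubgroup q with hGs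
  set t : ℤ := ∏ p ∈ P, (p : ℤ) with ht_def
  have ht0 : t ≠ 0 := by
    rw [ht_def]
    apply Finset.prod_ne_zero_iff.mpr
    intro p hp
    exact_mod_cast (hP p hp).ne_zero
  have hmem : ∀ (i j : Fin 3) (h : j ≠ i), elU i j h t ∈ Gs := by
    intro i j h
    rw [hGs, Subgroup.mem_iInf]
    intro q
    rw [Subgroup.mem_iInf]
    intro hq
    refine elU_mem_congruence i j h t q ?_
    rw [ht_def]
    exact Finset.dvd_prod_of_mem (fun p : ℕ => (p : ℤ)) hq
  rintro ⟨r, hmono⟩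
  letI := r
  have hr : ∀ g x y : ↥Gs, x ≤ y → x * g ≤ y * g := hmono
  have d10 : (1 : Fin 3) ≠ 0 := by decide
  have d20 : (2 : Fin 3) ≠ 0 := by decide
  have d21 : (2 : Fin 3) ≠ 1 := by decide
  have d01 : (0 : Fin 3) ≠ 1 := by decide
  have d02 : (0 : Fin 3) ≠ 2 := by decide
  have d12 : (1 : Fin 3) ≠ 2 := by decide
  let gg : Fin 6 → ↥Gs :=
    ![⟨elU 0 1 d10 t, hmem 0 1 d10⟩, ⟨elU 0 2 d20 t, hmem 0 2 d20⟩,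
      ⟨elU 1 2 d21 t, hmem 1 2 d21⟩, ⟨elU 1 0 d01 t, hmem 1 0 d01⟩,
      ⟨elU 2 0 d02 t, hmem 2 0 d02⟩, ⟨elU 2 1 d12 t, hmem 2 1 d12⟩]
  refine hexagon hr gg ?_ ?_ ?_
  · intro i
    fin_cases i
    · exact sub_ne_one _ (elU_ne_one 0 1 d10 t ht0)
    · exact sub_ne_one _ (elU_ne_one 0 2 d20 t ht0)
    · exact sub_ne_one _ (elU_ne_one 1 2 d21 t ht0)
    · exact sub_ne_one _ (elU_ne_one 1 0 d01 t ht0)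
    · exact sub_ne_one _ (elU_ne_one 2 0 d02 t ht0)
    · exact sub_ne_one _ (elU_ne_one 2 1 d12 t ht0)
  · intro i
    fin_cases i
    · exact sub_commute _ _ (elU_commute d10 d20 d10 d20 t t)
    · exact sub_commute _ _ (elU_commute d20 d21 d21 d20 t t)
    · exact sub_commute _ _ (elU_commute d21 d01 d21 d01 t t)
    · exact sub_commute _ _ (elU_commute d01 d02 d02 d01 t t)
    · exact sub_commute _ _ (elU_commute d02 d12 d02 d12 t t)
    · exact sub_commute _ _ (elU_commute d12 d10 d10 d12 t t)
  · intro i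
    fin_cases i
    · -- i = 0 : g5 * g1 = g0 ^ (-t) * (g1 * g5), backward
      refine ⟨-t, by simpa using ht0, ?_⟩
      have h := elU_rel d20 d12 d10 t t
      rw [show t * t = t * t from rfl, ← elU_zpow 0 1 d10 t t] at h
      exact sub_rel _ _ _ (-t) (rel_swap h)
    · -- i = 1 : g0 * g2 = g1 ^ t * (g2 * g0), forward
      refine ⟨t, ht0, ?_⟩
      have h := elU_rel d10 d21 d20 t t
      rw [← elU_zpow 0 2 d20 t t] at h
      exact sub_rel _ _ _ t h
    · -- i = 2 : g1 * g3 = g2 ^ (-t) * (g3 * g1), backward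
      refine ⟨-t, by simpa using ht0, ?_⟩
      have h := elU_rel d01 d20 d21 t t
      rw [← elU_zpow 1 2 d21 t t] at h
      exact sub_rel _ _ _ (-t) (rel_swap h)
    · -- i = 3 : g2 * g4 = g3 ^ t * (g4 * g2), forward
      refine ⟨t, ht0, ?_⟩
      have h := elU_rel d21 d02 d01 t t
      rw [← elU_zpow 1 0 d01 t t] at h
      exact sub_rel _ _ _ t h
    · -- i = 4 : g3 * g5 = g4 ^ (-t) * (g5 * g3), backward
      refine ⟨-t, by simpa using ht0, ?_⟩
      have h := elU_rel d12 d01 d02 t t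
      rw [← elU_zpow 2 0 d02 t t] at h
      exact sub_rel _ _ _ (-t) (rel_swap h)
    · -- i = 5 : g4 * g0 = g5 ^ t * (g0 * g4), forward
      refine ⟨t, ht0, ?_⟩
      have h := elU_rel d02 d10 d12 t t
      rw [← elU_zpow 2 1 d12 t t] at h
      exact sub_rel _ _ _ t h

section partB

variable {R : Type*} [CommRing R]

theorem unipotent_step (p j : ℕ) (hj : 1 ≤ j) (C : Matrix (Fin 3) (Fin 3) R) :
    ∃ D : Matrix (Fin 3) (Fin 3) R,
      (1 + ((p : R) ^ j) • C) ^ p = 1 + ((p : R) ^ (j + 1)) • D := by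
  set B : Matrix (Fin 3) (Fin 3) R := ((p : R) ^ j) • C with hB
  refine ⟨∑ i ∈ Finset.range p,
    ((if i = 0 then 1 else p.choose (i + 1) * p ^ (j * (i + 1) - (j + 1))) : ℕ) • C ^ (i + 1), ?_⟩
  rw [add_comm (1 : Matrix (Fin 3) (Fin 3) R) B,
    (Commute.one_right B).add_pow p, Finset.sum_range_succ']
  simp only [one_pow, mul_one, pow_zero, Nat.choose_zero_right, Nat.cast_one, one_mul]
  rw [Finset.smul_sum, add_comm]
  congr 1
  refine Finset.sum_congr rfl ?_
  intro i _
  have hBpow : B ^ (i + 1) = ((p : R) ^ (j * (i + 1))) • C ^ (i + 1) := by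
    rw [hB, smul_pow, ← pow_mul]
  rw [hBpow]
  have hcast : ∀ (n : ℕ) (X : Matrix (Fin 3) (Fin 3) R), X * (n : Matrix (Fin 3) (Fin 3) R)
      = ((n : R)) • X := by
    intro n X
    rw [← nsmul_eq_mul', ← Nat.cast_smul_eq_nsmul R]
  rw [hcast, smul_smul, ← Nat.cast_smul_eq_nsmul R, smul_smul]
  congr 1
  by_cases hi : i = 0
  · subst hi
    simp only [if_true, Nat.choose_one_right, Nat.cast_one, mul_one, Nat.mul_one, if_pos]
    simp [Nat.choose_one_right, pow_succ, mul_comm]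
  · rw [if_neg hi]
    have harith : p.choose (i + 1) * p ^ (j * (i + 1))
        = p ^ (j + 1) * (p.choose (i + 1) * p ^ (j * (i + 1) - (j + 1))) := by
      have hge : j + 1 ≤ j * (i + 1) := by
        have : 1 ≤ i := Nat.one_le_iff_ne_zero.mpr hi
        nlinarith
      have hsum : j * (i + 1) - (j + 1) + (j + 1) = j * (i + 1) := by omega
      rw [mul_comm (p ^ (j + 1)), mul_assoc, ← pow_add, hsum]
    calc (p.choose (i + 1) : R) * (p : R) ^ (j * (i + 1))
        = ((p.choose (i + 1) * p ^ (j * (i + 1)) : ℕ) : R) := by push_cast; ring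
      _ = ((p ^ (j + 1) * (p.choose (i + 1) * p ^ (j * (i + 1) - (j + 1))) : ℕ) : R) := by
          rw [harith]
      _ = (p : R) ^ (j + 1) * ((p.choose (i + 1) * p ^ (j * (i + 1) - (j + 1)) : ℕ) : R) := by
          push_cast; ring

theorem unipotent_iter (p : ℕ) (m : ℕ) (C : Matrix (Fin 3) (Fin 3) R) :
    ∃ D : Matrix (Fin 3) (Fin 3) R,
      (1 + ((p : R) ^ 1) • C) ^ (p ^ m) = 1 + ((p : R) ^ (m + 1)) • D := by
  induction m with
  | zero => exact ⟨C, by simp⟩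
  | succ m ih =>
    obtain ⟨D, hD⟩ := ih
    obtain ⟨D', hD'⟩ := unipotent_step p (m + 1) (by omega) D
    refine ⟨D', ?_⟩
    rw [show p ^ (m + 1) = p ^ m * p from pow_succ p m, pow_mul, hD, hD']

end partB

theorem residually (P : Finset ℕ) (hP : ∀ p ∈ P, p.Prime) (p : ℕ) (hp : p ∈ P) :
    IsResiduallyFinitePGroup p ↥(⨅ q ∈ P, congruenceSubgroup q) := by
  have pp := hP p hp
  intro g hg
  have hX : ((g : GL3) : Matrix (Fin 3) (Fin 3) ℤ) ≠ 1 := by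
    intro h
    exact hg (Subtype.ext (Units.ext h))
  obtain ⟨i, j, hij⟩ : ∃ i j, ((g : GL3) : Matrix (Fin 3) (Fin 3) ℤ) i j
      ≠ (1 : Matrix (Fin 3) (Fin 3) ℤ) i j := by
    by_contra hcon
    push_neg at hcon
    exact hX (Matrix.ext fun a b => hcon a b)
  set d : ℤ := ((g : GL3) : Matrix (Fin 3) (Fin 3) ℤ) i j - (1 : Matrix (Fin 3) (Fin 3) ℤ) i j
    with hd_def
  have hd : d ≠ 0 := sub_ne_zero.mpr hij
  set k : ℕ := d.natAbs with hk_def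
  have hk1 : 1 ≤ k := Int.natAbs_pos.mpr hd
  haveI : NeZero (p ^ k) := ⟨pow_ne_zero _ pp.ne_zero⟩
  let φ : ↥(⨅ q ∈ P, congruenceSubgroup q) →* Matrix.GeneralLinearGroup (Fin 3) (ZMod (p ^ k)) :=
    (Matrix.GeneralLinearGroup.map (n := Fin 3) (Int.castRingHom (ZMod (p ^ k)))).comp
      (⨅ q ∈ P, congruenceSubgroup q).subtype
  refine ⟨φ.ker, MonoidHom.normal_ker φ, ?_, ?_, ?_⟩
  · -- g ∉ ker φ
    intro hker
    rw [MonoidHom.mem_ker] at hker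
    have hval : (((g : GL3) : Matrix (Fin 3) (Fin 3) ℤ)).map (Int.castRingHom (ZMod (p ^ k)))
        = (1 : Matrix (Fin 3) (Fin 3) (ZMod (p ^ k))) := congrArg Units.val hker
    have hentry : ((((g : GL3) : Matrix (Fin 3) (Fin 3) ℤ) i j : ℤ) : ZMod (p ^ k))
        = (1 : Matrix (Fin 3) (Fin 3) (ZMod (p ^ k))) i j := by
      rw [← hval]; rfl
    have hd0 : ((d : ℤ) : ZMod (p ^ k)) = 0 := by
      rw [hd_def]
      push_cast
      rw [hentry]
      by_cases hab : i = j <;> simp [Matrix.one_apply, hab]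
    rw [ZMod.intCast_zmod_eq_zero_iff_dvd] at hd0
    have hdvd : (p ^ k : ℕ) ∣ d.natAbs := by
      have h1 : ((p ^ k : ℕ) : ℤ) ∣ d := by exact_mod_cast hd0
      exact Int.natCast_dvd_natCast.mp (Int.dvd_natAbs.mpr h1)
    have hle : p ^ k ≤ k := by
      rw [hk_def]
      exact Nat.le_of_dvd (by omega) hdvd
    have hlt : k < p ^ k := lt_of_lt_of_le (Nat.lt_two_pow_self (n := k)) (Nat.pow_le_pow_left pp.two_le k)
    omega
  · -- finiteness
    haveI : Finite ↥φ.range := Subtype.finite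
    exact Finite.of_equiv _ (QuotientGroup.quotientKerEquivRange φ).symm.toEquiv
  · -- p-group
    intro x
    refine QuotientGroup.induction_on x ?_
    intro g'
    refine ⟨k - 1, ?_⟩
    rw [← QuotientGroup.mk_pow, QuotientGroup.eq_one_iff, MonoidHom.mem_ker, map_pow]
    -- reduce to matrix statement
    apply Units.ext
    rw [Units.val_pow_eq_pow_val]
    -- the matrix A
    have hmem : (g' : GL3) ∈ congruenceSubgroup p := by
      have h2 : (g' : GL3) ∈ ⨅ q ∈ P, congruenceSubgroup q := g'.2
      rw [Subgroup.mem_iInf] at h2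
      have h3 := h2 p
      rw [Subgroup.mem_iInf] at h3
      exact h3 hp
    rw [congruenceSubgroup, MonoidHom.mem_ker] at hmem
    have hmodp : (((g' : GL3) : Matrix (Fin 3) (Fin 3) ℤ)).map (Int.castRingHom (ZMod p))
        = (1 : Matrix (Fin 3) (Fin 3) (ZMod p)) := congrArg Units.val hmem
    have hdiv : ∀ a b : Fin 3, ∃ c : ZMod (p ^ k),
        ((((g' : GL3) : Matrix (Fin 3) (Fin 3) ℤ) a b : ℤ) : ZMod (p ^ k))
          = (1 : Matrix (Fin 3) (Fin 3) (ZMod (p ^ k))) a b + (p : ZMod (p ^ k)) * c := by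
      intro a b
      have h1 : ((((g' : GL3) : Matrix (Fin 3) (Fin 3) ℤ) a b : ℤ) : ZMod p)
          = (1 : Matrix (Fin 3) (Fin 3) (ZMod p)) a b := by
        rw [← hmodp]; rfl
      have h2 : (p : ℤ) ∣ (((g' : GL3) : Matrix (Fin 3) (Fin 3) ℤ) a b
          - (1 : Matrix (Fin 3) (Fin 3) ℤ) a b) := by
        rw [← ZMod.intCast_zmod_eq_zero_iff_dvd]
        push_cast
        rw [h1]
        by_cases hab : a = b <;> simp [Matrix.one_apply, hab]
      obtain ⟨m, hm⟩ := h2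
      refine ⟨(m : ZMod (p ^ k)), ?_⟩
      have h3 : ((g' : GL3) : Matrix (Fin 3) (Fin 3) ℤ) a b
          = (1 : Matrix (Fin 3) (Fin 3) ℤ) a b + p * m := by omega
      rw [h3]
      push_cast
      by_cases hab : a = b <;> simp [Matrix.one_apply, hab]
    let C : Matrix (Fin 3) (Fin 3) (ZMod (p ^ k)) :=
      Matrix.of fun a b => Classical.choose (hdiv a b)
    have hA : ((φ g') : Matrix (Fin 3) (Fin 3) (ZMod (p ^ k)))
        = 1 + ((p : ZMod (p ^ k)) ^ 1) • C := by
      ext a b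
      have hspec := Classical.choose_spec (hdiv a b)
      show ((((g' : GL3) : Matrix (Fin 3) (Fin 3) ℤ)).map (Int.castRingHom (ZMod (p ^ k)))) a b = _
      rw [Matrix.map_apply]
      rw [Matrix.add_apply, Matrix.smul_apply, pow_one]
      exact hspec
    rw [hA]
    obtain ⟨D, hD⟩ := unipotent_iter p (k - 1) C
    rw [hD]
    have hk' : k - 1 + 1 = k := by omega
    rw [hk']
    have hp0 : ((p : ZMod (p ^ k)))^ k = 0 := by
      rw [← Nat.cast_pow, ZMod.natCast_self]
    rw [hp0, zero_smul, add_zero]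
    rw [Units.val_one]


/-- Let `P` be a finite set of primes and `G = ⋂_{p ∈ P} G_p` the intersection of
the principal congruence subgroups of level `p` in `GL₃(ℤ)`.  Then `G` is a
residually finite `p`-group for every `p ∈ P`, and `G` is not right orderable. -/
theorem stmt_3 (P : Finset ℕ) (hP : ∀ p ∈ P, p.Prime) :
    (∀ p ∈ P, IsResiduallyFinitePGroup p ↥(⨅ q ∈ P, congruenceSubgroup q)) ∧
      ¬ IsRightOrderable ↥(⨅ q ∈ P, congruenceSubgroup q) := by
  exact ⟨fun p hp => residually P hP p hp, not_rightOrderable_inter P hP⟩
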